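/- The dBKP polynomial Q(f) = (f100 - f001)(f010 - f111)(f101 - f110)(f011 - f000) - (f001 - f010)(f111 - f100)(f000 - f101)(f110 - f011) is invariant (up to a nonzero multiplicative factor) under simultaneous Möbius transformations of all vertex variables: if each f_{ijk} is replaced by (a·f_{ijk} + b)/(c·f_{ijk} + d) with ad - bc ≠ 0, then the resulting rational function equals (ad - bc)^4 · Q(f) / Π_{ijk}(c·f_{ijk} + d). In particular for translations (f ↦ f + b), scalings (f ↦ a·f, a ≠ 0), and inversion (f ↦ 1/f, clearing denominators), the zero set of Q is preserved. -/

import Mathlib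

set_option maxHeartbeats 1600000 in
private lemma qdaux {K : Type*} [Field K] (a b c d x0 x1 x2 x3 x4 x5 x6 x7 : K)
    (h0 : c*x0+d ≠ 0) (h1 : c*x1+d ≠ 0) (h2 : c*x2+d ≠ 0) (h3 : c*x3+d ≠ 0)
    (h4 : c*x4+d ≠ 0) (h5 : c*x5+d ≠ 0) (h6 : c*x6+d ≠ 0) (h7 : c*x7+d ≠ 0) :
    ((a*x4+b)/(c*x4+d) - (a*x1+b)/(c*x1+d)) * ((a*x2+b)/(c*x2+d) - (a*x7+b)/(c*x7+d)) *
      ((a*x5+b)/(c*x5+d) - (a*x6+b)/(c*x6+d)) * ((a*x3+b)/(c*x3+d) - (a*x0+b)/(c*x0+d))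
    - ((a*x1+b)/(c*x1+d) - (a*x2+b)/(c*x2+d)) * ((a*x7+b)/(c*x7+d) - (a*x4+b)/(c*x4+d)) *
      ((a*x0+b)/(c*x0+d) - (a*x5+b)/(c*x5+d)) * ((a*x6+b)/(c*x6+d) - (a*x3+b)/(c*x3+d))
    = (a*d - b*c)^4 * ((x4-x1)*(x2-x7)*(x5-x6)*(x3-x0) - (x1-x2)*(x7-x4)*(x0-x5)*(x6-x3)) /
      ((c*x0+d)*(c*x1+d)*(c*x2+d)*(c*x3+d)*(c*x4+d)*(c*x5+d)*(c*x6+d)*(c*x7+d)) := by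
  have hd : ∀ x y : K, c*x+d ≠ 0 → c*y+d ≠ 0 →
      (a*x+b)/(c*x+d) - (a*y+b)/(c*y+d) = (a*d-b*c)*(x-y)/((c*x+d)*(c*y+d)) := by
    intro x y hx hy
    rw [div_sub_div _ _ hx hy]
    congr 1
    ring
  rw [hd _ _ h4 h1, hd _ _ h2 h7, hd _ _ h5 h6, hd _ _ h3 h0,
    hd _ _ h1 h2, hd _ _ h7 h4, hd _ _ h0 h5, hd _ _ h6 h3]
  field_simp

/-- the dBKP expression evaluated at values attached to the cube vertices -/
def QdFun {R : Type*} [CommRing R] (f : Fin 2 × Fin 2 × Fin 2 → R) : R :=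
  (f (1,0,0) - f (0,0,1)) * (f (0,1,0) - f (1,1,1)) * (f (1,0,1) - f (1,1,0)) *
    (f (0,1,1) - f (0,0,0))
  - (f (0,0,1) - f (0,1,0)) * (f (1,1,1) - f (1,0,0)) * (f (0,0,0) - f (1,0,1)) *
    (f (1,1,0) - f (0,1,1))

theorem stmt7 {K : Type*} [Field K] [CharZero K]
    (a b c d : K) (f : Fin 2 × Fin 2 × Fin 2 → K)
    (hdet : a * d - b * c ≠ 0) (hden : ∀ v, c * f v + d ≠ 0) :
    QdFun (fun v => (a * f v + b) / (c * f v + d)) =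
      (a * d - b * c) ^ 4 * QdFun f / ∏ v : Fin 2 × Fin 2 × Fin 2, (c * f v + d) ∧
    (QdFun (fun v => (a * f v + b) / (c * f v + d)) = 0 ↔ QdFun f = 0) := by
  have hprod : ∏ v : Fin 2 × Fin 2 × Fin 2, (c * f v + d) =
      (c * f (0,0,0) + d) * (c * f (0,0,1) + d) * (c * f (0,1,0) + d) * (c * f (0,1,1) + d) *
      (c * f (1,0,0) + d) * (c * f (1,0,1) + d) * (c * f (1,1,0) + d) * (c * f (1,1,1) + d) := by
    rw [Fintype.prod_prod_type]
    simp only [Fin.prod_univ_two, Fintype.prod_prod_type]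
    ring
  have hprodne : ∏ v : Fin 2 × Fin 2 × Fin 2, (c * f v + d) ≠ 0 :=
    Finset.prod_ne_zero_iff.mpr fun v _ => hden v
  have key : QdFun (fun v => (a * f v + b) / (c * f v + d)) =
      (a * d - b * c) ^ 4 * QdFun f / ∏ v : Fin 2 × Fin 2 × Fin 2, (c * f v + d) := by
    rw [hprod]
    show _ = _
    simp only [QdFun]
    exact qdaux a b c d (f (0,0,0)) (f (0,0,1)) (f (0,1,0)) (f (0,1,1)) (f (1,0,0))
      (f (1,0,1)) (f (1,1,0)) (f (1,1,1))
      (hden _) (hden _) (hden _) (hden _) (hden _) (hden _) (hden _) (hden _)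
  refine ⟨key, ?_⟩
  rw [key, div_eq_zero_iff]
  simp [hprodne, pow_eq_zero_iff, hdet]
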